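/- Let f ∈ DNF^{k,r} and let ρ be a random restriction with parameter p ≤ 1/(28k). Then E_ρ[L₁(f|ρ)] ≤ 2r, where L₁(g) = ∑_S |ĝ(S)| is the total L₁-norm of the Fourier coefficients of the restricted function. -/

import Mathlib

/-- Fourier coefficient `f̂(S) = E_x[f(x)·χ_S(x)]` of `f : {−1,1}^n → ℝ`,
identifying `{0,1}` with `{−1,1}` via `b ↦ 2b−1` (`true ↦ 1`, `false ↦ −1`). -/
noncomputable def pbFourier {n : ℕ} (f : (Fin n → Bool) → ℝ)
    (S : Finset (Fin n)) : ℝ :=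
  (∑ x : Fin n → Bool, f x * ∏ i ∈ S, (if x i then (1 : ℝ) else -1)) / 2 ^ n

/-- `f ∈ DNF^{k,r}`: `f = (2/r)·F − 1` for a pseudo-Boolean k-DNF `F` with
constants in `{0,…,r}`. -/
def IsPBDNF {n : ℕ} (k r : ℕ) (f : (Fin n → Bool) → ℝ) : Prop :=
  ∃ (m : ℕ) (a : Fin m → ℕ) (A B : Fin m → Finset (Fin n)),
    (∀ t, a t ≤ r) ∧ (∀ t, (A t).card + (B t).card ≤ k) ∧
    ∀ x, f x = 2 / r *
      ((Finset.univ.sup fun t =>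
        if (∀ i ∈ A t, x i = true) ∧ (∀ j ∈ B t, x j = false) then a t else 0 : ℕ) : ℝ)
      - 1

/-- The restriction `f|ρ` of `f` by `ρ : Fin n → Option Bool` (`none` = `★`,
i.e. a live variable); dead variables are fixed according to `ρ`. -/
def restrictFun {n : ℕ} (f : (Fin n → Bool) → ℝ) (ρ : Fin n → Option Bool) :
    (Fin n → Bool) → ℝ :=
  fun x => f fun i => (ρ i).getD (x i)

open scoped Classical

noncomputable section AuxPBDNF
namespace AuxPBDNF
variable {n : ℕ}
structure Trm (n : ℕ) where
  A : Finset (Fin n)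
  B : Finset (Fin n)
  a : ℕ
def Trm.V (t : Trm n) : Finset (Fin n) := t.A ∪ t.B
def sat (t : Trm n) (x : Fin n → Bool) : Prop :=
  (∀ i ∈ t.A, x i = true) ∧ (∀ j ∈ t.B, x j = false)
def evalL (L : List (Trm n)) (x : Fin n → Bool) : ℕ :=
  (L.map (fun t => if sat t x then t.a else 0)).foldr max 0

def fals (t : Trm n) (ρ : Fin n → Option Bool) : Prop :=
  (∃ i ∈ t.A, ρ i = some false) ∨ (∃ j ∈ t.B, ρ j = some true)
def stars (t : Trm n) (ρ : Fin n → Option Bool) : Finset (Fin n) :=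
  t.V.filter (fun i => ρ i = none)
def setAll (ρ : Fin n → Option Bool) (Y y : Finset (Fin n)) : Fin n → Option Bool :=
  fun i => if i ∈ Y then some (decide (i ∈ y)) else ρ i
def unsetAll (ρ : Fin n → Option Bool) (Y : Finset (Fin n)) : Fin n → Option Bool :=
  fun i => if i ∈ Y then none else ρ i
def satSet (t : Trm n) (ρ : Fin n → Option Bool) : Finset (Fin n) :=
  t.V.filter (fun i => ρ i = some (decide (i ∈ t.A)))
def Ext (ρ σ : Fin n → Option Bool) : Prop := ∀ i b, ρ i = some b → σ i = some b

lemma Ext.refl (ρ : Fin n → Option Bool) : Ext ρ ρ := fun _ _ h => h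

lemma Ext.fals_mono {t : Trm n} {ρ σ} (h : Ext ρ σ) (hf : fals t ρ) : fals t σ := by
  rcases hf with ⟨i, hi, hv⟩ | ⟨j, hj, hv⟩
  · exact Or.inl ⟨i, hi, h i false hv⟩
  · exact Or.inr ⟨j, hj, h j true hv⟩

lemma ext_unsetAll_setAll {σ σ' : Fin n → Option Bool} {Y y : Finset (Fin n)}
    (h : Ext σ σ') : Ext (unsetAll σ Y) (setAll σ' Y y) := by
  intro i b hb
  by_cases hi : i ∈ Y
  · simp [unsetAll, hi] at hb
  · simp only [unsetAll, hi, if_false] at hb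
    simp only [setAll, hi, if_false]
    exact h i b hb

lemma ext_unsetAll (σ : Fin n → Option Bool) (Y : Finset (Fin n)) :
    Ext (unsetAll σ Y) σ := by
  intro i b hb
  by_cases hi : i ∈ Y <;> simp [unsetAll, hi] at hb ⊢ <;> exact hb

-- agreement on V t determines fals, stars, satSet
def agreeOn (s : Finset (Fin n)) (ρ σ : Fin n → Option Bool) : Prop := ∀ i ∈ s, ρ i = σ i

lemma fals_congr {t : Trm n} {ρ σ} (h : agreeOn t.V ρ σ) : fals t ρ ↔ fals t σ := by
  unfold fals
  constructor <;> rintro (⟨i, hi, hv⟩ | ⟨j, hj, hv⟩)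
  · exact Or.inl ⟨i, hi, by rw [← h i (Finset.mem_union_left _ hi)]; exact hv⟩
  · exact Or.inr ⟨j, hj, by rw [← h j (Finset.mem_union_right _ hj)]; exact hv⟩
  · exact Or.inl ⟨i, hi, by rw [h i (Finset.mem_union_left _ hi)]; exact hv⟩
  · exact Or.inr ⟨j, hj, by rw [h j (Finset.mem_union_right _ hj)]; exact hv⟩

lemma stars_congr {t : Trm n} {ρ σ} (h : agreeOn t.V ρ σ) : stars t ρ = stars t σ := by
  unfold stars
  apply Finset.filter_congr
  intro i hi
  rw [h i hi]

lemma satSet_congr {t : Trm n} {ρ σ} (h : agreeOn t.V ρ σ) : satSet t ρ = satSet t σ := by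
  unfold satSet
  apply Finset.filter_congr
  intro i hi
  rw [h i hi]

-- setAll algebra
lemma setAll_setAll (ρ : Fin n → Option Bool) (Y y y' : Finset (Fin n)) :
    setAll (setAll ρ Y y) Y y' = setAll ρ Y y' := by
  funext i; by_cases hi : i ∈ Y <;> simp [setAll, hi]

lemma setAll_unsetAll (ρ : Fin n → Option Bool) (Y y : Finset (Fin n)) :
    setAll (unsetAll ρ Y) Y y = setAll ρ Y y := by
  funext i; by_cases hi : i ∈ Y <;> simp [setAll, unsetAll, hi]

lemma unsetAll_setAll (ρ : Fin n → Option Bool) (Y y : Finset (Fin n)) :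
    unsetAll (setAll ρ Y y) Y = unsetAll ρ Y := by
  funext i; by_cases hi : i ∈ Y <;> simp [setAll, unsetAll, hi]

lemma unsetAll_eq_self {ρ : Fin n → Option Bool} {Y : Finset (Fin n)}
    (h : ∀ i ∈ Y, ρ i = none) : unsetAll ρ Y = ρ := by
  funext i; by_cases hi : i ∈ Y <;> simp [unsetAll, hi]
  exact (h i hi).symm

lemma setAll_eq_self {ρ : Fin n → Option Bool} {Y y : Finset (Fin n)}
    (h : ∀ i ∈ Y, ρ i = some (decide (i ∈ y))) : setAll ρ Y y = ρ := by
  funext i; by_cases hi : i ∈ Y <;> simp [setAll, hi]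
  exact (h i hi).symm

lemma stars_setAll (t : Trm n) (ρ : Fin n → Option Bool) (Y y : Finset (Fin n)) :
    stars t (setAll ρ Y y) = stars t ρ \ Y := by
  ext i
  simp only [stars, Finset.mem_filter, Finset.mem_sdiff]
  simp only [setAll]
  by_cases hi : i ∈ Y <;> simp [hi] <;> tauto

lemma mem_stars_none {t : Trm n} {ρ : Fin n → Option Bool} {i : Fin n}
    (h : i ∈ stars t ρ) : ρ i = none := (Finset.mem_filter.1 h).2

lemma stars_subset_V (t : Trm n) (ρ : Fin n → Option Bool) : stars t ρ ⊆ t.V :=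
  Finset.filter_subset _ _

lemma satSet_subset_V (t : Trm n) (ρ : Fin n → Option Bool) : satSet t ρ ⊆ t.V :=
  Finset.filter_subset _ _


-- class transfer lemmas
section CT
variable {t : Trm n} {ρ ρh : Fin n → Option Bool} {Y : Finset (Fin n)}

/-- CT1: the canonical "satisfying" extension of an alive term. -/
lemma ct1 (hdisj : Disjoint t.A t.B) (hnf : ¬ fals t ρ) (hst : stars t ρ = Y) :
    ¬ fals t (setAll ρ Y (Y ∩ t.A)) ∧ stars t (setAll ρ Y (Y ∩ t.A)) = ∅ ∧
      Y ⊆ satSet t (setAll ρ Y (Y ∩ t.A)) := by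
  subst hst
  refine ⟨?_, by rw [stars_setAll]; exact Finset.sdiff_self _, ?_⟩
  · intro hf
    apply hnf
    rcases hf with ⟨i, hi, hv⟩ | ⟨j, hj, hv⟩
    · by_cases hmem : i ∈ stars t ρ
      · exfalso
        simp only [setAll, hmem, if_pos] at hv
        have : decide (i ∈ stars t ρ ∩ t.A) = false := by
          simpa using hv
        simp [Finset.mem_inter, hmem, hi] at this
      · simp only [setAll, hmem, if_neg] at hv
        exact Or.inl ⟨i, hi, hv⟩
    · by_cases hmem : j ∈ stars t ρ
      · exfalso
        simp only [setAll, hmem, if_pos] at hv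
        have : decide (j ∈ stars t ρ ∩ t.A) = true := by simpa using hv
        simp only [decide_eq_true_eq, Finset.mem_inter] at this
        exact (Finset.disjoint_left.1 hdisj this.2 hj)
      · simp only [setAll, hmem, if_neg] at hv
        exact Or.inr ⟨j, hj, hv⟩
  · intro i hi
    have hiV : i ∈ t.V := stars_subset_V t ρ hi
    simp only [satSet, Finset.mem_filter]
    simp only [setAll, hi, if_pos]
    refine ⟨hiV, ?_⟩
    congr 1
    simp [Finset.mem_inter, hi]

/-- CT2: un-setting a subset of the satisfied positions of a fully determined
non-falsified term yields an alive term with stars exactly `Y`. -/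
lemma ct2 (hnf : ¬ fals t ρh) (hst : stars t ρh = ∅) (hY : Y ⊆ satSet t ρh) :
    ¬ fals t (unsetAll ρh Y) ∧ stars t (unsetAll ρh Y) = Y := by
  constructor
  · intro hf
    exact hnf (Ext.fals_mono (ext_unsetAll ρh Y) hf)
  · ext i
    simp only [stars, Finset.mem_filter]
    simp only [unsetAll]
    by_cases hi : i ∈ Y
    · simp [hi, satSet_subset_V t ρh (hY hi)]
    · simp only [hi, if_neg, iff_false]
      rintro ⟨hiV, hnone⟩
      have : i ∈ stars t ρh := Finset.mem_filter.2 ⟨hiV, hnone⟩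
      rw [hst] at this
      exact absurd this (Finset.notMem_empty i)

/-- CT3a: round trip starting from the alive side. -/
lemma ct3a (hst : stars t ρ = Y) : unsetAll (setAll ρ Y (Y ∩ t.A)) Y = ρ := by
  rw [unsetAll_setAll]
  exact unsetAll_eq_self (fun i hi => mem_stars_none (hst ▸ hi))

/-- CT3b: round trip starting from the determined side. -/
lemma ct3b (hY : Y ⊆ satSet t ρh) : setAll (unsetAll ρh Y) Y (Y ∩ t.A) = ρh := by
  rw [setAll_unsetAll]
  apply setAll_eq_self
  intro i hi
  have := (Finset.mem_filter.1 (hY hi)).2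
  rw [this]
  congr 1
  simp [Finset.mem_inter, hi]
end CT

-- weights
section W
variable (p : ℝ)

def W (ρ : Fin n → Option Bool) : ℝ := ∏ i, if ρ i = none then p else (1 - p) / 2

variable {p}

lemma W_nonneg (hp0 : 0 ≤ p) (hp1 : p ≤ 1) (ρ : Fin n → Option Bool) : 0 ≤ W p ρ :=
  Finset.prod_nonneg (fun i _ => by by_cases h : ρ i = none <;> simp [h] <;> linarith)

lemma W_sum : ∑ ρ : Fin n → Option Bool, W p ρ = 1 := by
  unfold W
  rw [← Fintype.piFinset_univ,
    ← Finset.prod_univ_sum (t := fun _ : Fin n => (Finset.univ : Finset (Option Bool)))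
      (f := fun _ o => if o = none then p else (1 - p) / 2)]
  have : (∑ o : Option Bool, (if o = none then p else (1 - p) / 2)) = 1 := by
    rw [Fintype.sum_option]
    simp
    ring
  simp only [this, Finset.prod_const_one]

lemma prod_split (F G : Fin n → ℝ) (c : ℝ) (Y : Finset (Fin n))
    (h1 : ∀ i ∈ Y, F i = c * G i) (h2 : ∀ i ∉ Y, F i = G i) :
    ∏ i, F i = c ^ Y.card * ∏ i, G i := by
  rw [← Finset.prod_mul_prod_compl Y F, ← Finset.prod_mul_prod_compl Y G]
  rw [Finset.prod_congr rfl h1, Finset.prod_congr rfl (fun i hi => h2 i (by simpa using hi))]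
  rw [Finset.prod_mul_distrib, Finset.prod_const]
  ring

lemma W_setAll_of_none (hp1 : p < 1) {ρ : Fin n → Option Bool} {Y y : Finset (Fin n)}
    (h : ∀ i ∈ Y, ρ i = none) :
    W p ρ = (2 * p / (1 - p)) ^ Y.card * W p (setAll ρ Y y) := by
  unfold W
  apply prod_split
  · intro i hi
    rw [h i hi]
    simp only [if_pos rfl, setAll, hi, if_pos]
    simp only [reduceCtorEq, if_false]
    have h1p : (1 : ℝ) - p ≠ 0 := by linarith
    field_simp
  · intro i hi
    simp [setAll, hi]

lemma W_setAll_of_some {ρ : Fin n → Option Bool} {Y y : Finset (Fin n)}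
    (h : ∀ i ∈ Y, ρ i ≠ none) : W p (setAll ρ Y y) = W p ρ := by
  unfold W
  apply Finset.prod_congr rfl
  intro i _
  by_cases hi : i ∈ Y
  · simp only [setAll, hi, if_pos, reduceCtorEq, if_false, if_neg (h i hi)]
  · simp [setAll, hi]
end W

-- Fourier
section Fourier

def L1 (g : (Fin n → Bool) → ℝ) : ℝ := ∑ S : Finset (Fin n), |pbFourier g S|

def chr (S : Finset (Fin n)) (x : Fin n → Bool) : ℝ := ∏ i ∈ S, (if x i then (1 : ℝ) else -1)

lemma l1_nonneg (g : (Fin n → Bool) → ℝ) : 0 ≤ L1 g :=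
  Finset.sum_nonneg fun _ _ => abs_nonneg _

lemma pbFourier_add (g h : (Fin n → Bool) → ℝ) (S : Finset (Fin n)) :
    pbFourier (fun x => g x + h x) S = pbFourier g S + pbFourier h S := by
  unfold pbFourier
  rw [← add_div, ← Finset.sum_add_distrib]
  congr 1
  apply Finset.sum_congr rfl
  intro x _
  ring

lemma pbFourier_smul (c : ℝ) (g : (Fin n → Bool) → ℝ) (S : Finset (Fin n)) :
    pbFourier (fun x => c * g x) S = c * pbFourier g S := by
  unfold pbFourier
  rw [← mul_div_assoc, Finset.mul_sum]
  congr 1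
  exact Finset.sum_congr rfl fun x _ => by ring

lemma l1_add_le (g h : (Fin n → Bool) → ℝ) :
    L1 (fun x => g x + h x) ≤ L1 g + L1 h := by
  unfold L1
  rw [← Finset.sum_add_distrib]
  apply Finset.sum_le_sum
  intro S _
  rw [pbFourier_add]
  exact abs_add_le _ _

lemma l1_smul (c : ℝ) (g : (Fin n → Bool) → ℝ) :
    L1 (fun x => c * g x) = |c| * L1 g := by
  unfold L1
  rw [Finset.mul_sum]
  apply Finset.sum_congr rfl
  intro S _
  rw [pbFourier_smul, abs_mul]

def flipIn (i : Fin n) (S : Finset (Fin n)) : Finset (Fin n) :=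
  if i ∈ S then S.erase i else insert i S

lemma flipIn_involutive (i : Fin n) : Function.Involutive (flipIn i) := by
  intro S
  unfold flipIn
  by_cases h : i ∈ S
  · simp [h, Finset.insert_erase h]
  · simp [h, Finset.erase_insert h]

lemma chr_mul_flip (i : Fin n) (S : Finset (Fin n)) (x : Fin n → Bool) :
    (if x i then (1:ℝ) else -1) * ∏ j ∈ S, (if x j then (1:ℝ) else -1)
      = ∏ j ∈ flipIn i S, (if x j then (1:ℝ) else -1) := by
  unfold flipIn
  by_cases h : i ∈ S
  · rw [if_pos h, ← Finset.prod_erase_mul S _ h]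
    have hsq : (if x i then (1:ℝ) else -1) * (if x i then (1:ℝ) else -1) = 1 := by
      by_cases hx : x i <;> simp [hx]
    calc (if x i then (1:ℝ) else -1) *
          ((∏ j ∈ S.erase i, (if x j then (1:ℝ) else -1)) * (if x i then (1:ℝ) else -1))
        = ((if x i then (1:ℝ) else -1) * (if x i then (1:ℝ) else -1)) *
            ∏ j ∈ S.erase i, (if x j then (1:ℝ) else -1) := by ring
      _ = ∏ j ∈ S.erase i, (if x j then (1:ℝ) else -1) := by rw [hsq, one_mul]
  · rw [if_neg h, Finset.prod_insert h]

lemma pbFourier_mul_chr (g : (Fin n → Bool) → ℝ) (i : Fin n) (S : Finset (Fin n)) :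
    pbFourier (fun x => (if x i then (1:ℝ) else -1) * g x) S = pbFourier g (flipIn i S) := by
  unfold pbFourier
  congr 1
  apply Finset.sum_congr rfl
  intro x _
  rw [← chr_mul_flip]
  ring

lemma l1_mul_chr (g : (Fin n → Bool) → ℝ) (i : Fin n) :
    L1 (fun x => (if x i then (1:ℝ) else -1) * g x) = L1 g := by
  unfold L1
  rw [← Equiv.sum_comp ((flipIn_involutive i).toPerm _) (fun S => |pbFourier g S|)]
  apply Finset.sum_congr rfl
  intro S _
  rw [pbFourier_mul_chr]
  rfl

lemma l1_congr {g h : (Fin n → Bool) → ℝ} (he : ∀ x, g x = h x) : L1 g = L1 h := by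
  have : g = h := funext he
  rw [this]

lemma chr_sum_zero {S : Finset (Fin n)} (hS : S ≠ ∅) :
    ∑ x : Fin n → Bool, ∏ j ∈ S, (if x j then (1:ℝ) else -1) = 0 := by
  obtain ⟨i, hi⟩ := Finset.nonempty_iff_ne_empty.2 hS
  have hinv : Function.Involutive (fun x : Fin n → Bool => Function.update x i (!(x i))) := by
    intro x
    funext j
    by_cases hj : j = i
    · subst hj; simp
    · simp [Function.update_of_ne hj]
  have hflip : ∀ x : Fin n → Bool,
      (∏ j ∈ S, (if (Function.update x i (!(x i))) j then (1:ℝ) else -1))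
        = - ∏ j ∈ S, (if x j then (1:ℝ) else -1) := by
    intro x
    rw [← Finset.prod_erase_mul S _ hi, ← Finset.prod_erase_mul S
      (fun j => (if x j then (1:ℝ) else -1)) hi]
    have h1 : ∀ j ∈ S.erase i, (if (Function.update x i (!(x i))) j then (1:ℝ) else -1)
        = (if x j then (1:ℝ) else -1) := by
      intro j hj
      rw [Function.update_of_ne (Finset.ne_of_mem_erase hj)]
    rw [Finset.prod_congr rfl h1]
    have : (if (Function.update x i (!(x i))) i then (1:ℝ) else -1)
        = - (if x i then (1:ℝ) else -1) := by
      rw [Function.update_self]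
      by_cases hx : x i <;> simp [hx]
    rw [this]
    ring
  have := Equiv.sum_comp (hinv.toPerm _)
    (fun x => ∏ j ∈ S, (if x j then (1:ℝ) else -1))
  have h2 : ∑ x : Fin n → Bool, ∏ j ∈ S, (if x j then (1:ℝ) else -1)
      = - ∑ x : Fin n → Bool, ∏ j ∈ S, (if x j then (1:ℝ) else -1) := by
    calc ∑ x : Fin n → Bool, ∏ j ∈ S, (if x j then (1:ℝ) else -1)
        = ∑ x : Fin n → Bool, ∏ j ∈ S, (if (Function.update x i (!(x i))) j then (1:ℝ) else -1) := by
          rw [← this]; rfl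
      _ = ∑ x : Fin n → Bool, - ∏ j ∈ S, (if x j then (1:ℝ) else -1) := by
          exact Finset.sum_congr rfl fun x _ => hflip x
      _ = - ∑ x : Fin n → Bool, ∏ j ∈ S, (if x j then (1:ℝ) else -1) := by
          rw [Finset.sum_neg_distrib]
  linarith

lemma pbFourier_const (c : ℝ) (S : Finset (Fin n)) :
    pbFourier (fun _ => c) S = if S = ∅ then c else 0 := by
  unfold pbFourier
  by_cases hS : S = ∅
  · subst hS
    have hcard : (Finset.univ : Finset (Fin n → Bool)).card = 2 ^ n := by
      simp [Finset.card_univ]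
    simp only [Finset.prod_empty, mul_one, Finset.sum_const, hcard, nsmul_eq_mul, if_pos]
    push_cast
    rw [mul_comm, mul_div_assoc, div_self (by positivity), mul_one]
  · rw [if_neg hS]
    have : ∑ x : Fin n → Bool, c * ∏ j ∈ S, (if x j then (1:ℝ) else -1)
        = c * ∑ x : Fin n → Bool, ∏ j ∈ S, (if x j then (1:ℝ) else -1) := by
      rw [Finset.mul_sum]
    rw [this, chr_sum_zero hS, mul_zero, zero_div]

lemma l1_const (c : ℝ) : L1 (fun _ : Fin n → Bool => c) = |c| := by
  unfold L1
  rw [Finset.sum_eq_single (∅ : Finset (Fin n))]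
  · rw [pbFourier_const, if_pos rfl]
  · intro S _ hS
    rw [pbFourier_const, if_neg hS, abs_zero]
  · intro h
    exact absurd (Finset.mem_univ _) h

lemma l1_sub_le (g h : (Fin n → Bool) → ℝ) :
    L1 (fun x => g x - h x) ≤ L1 g + L1 h := by
  have e1 : ∀ x, g x - h x = g x + (-1) * h x := fun x => by ring
  rw [l1_congr e1]
  refine le_trans (l1_add_le _ _) ?_
  rw [l1_smul]
  simp

lemma l1_split (g : (Fin n → Bool) → ℝ) (i : Fin n) :
    L1 g ≤ L1 (fun x => g (Function.update x i false)) +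
      L1 (fun x => g (Function.update x i true)) := by
  set g0 := fun x => g (Function.update x i false) with hg0
  set g1 := fun x => g (Function.update x i true) with hg1
  have hid : ∀ x, g x = (1/2) * (g0 x + g1 x) +
      (1/2) * ((if x i then (1:ℝ) else -1) * (g1 x - g0 x)) := by
    intro x
    by_cases hx : x i
    · have h1 : Function.update x i true = x := by
        rw [← hx]; exact Function.update_eq_self i x
      simp only [hg0, hg1, h1, if_pos hx]
      ring
    · have hxf : x i = false := by simpa using hx
      have h0 : Function.update x i false = x := by
        rw [← hxf]; exact Function.update_eq_self i x
      simp only [hg0, hg1, h0]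
      rw [if_neg (by simp [hxf])]
      ring
  rw [l1_congr hid]
  refine le_trans (l1_add_le _ _) ?_
  have e1 : L1 (fun x => (1/2) * (g0 x + g1 x)) ≤ (1/2) * (L1 g0 + L1 g1) := by
    rw [l1_smul]
    have : |(1:ℝ)/2| = 1/2 := by norm_num
    rw [this]
    have := l1_add_le g0 g1
    nlinarith [l1_nonneg g0, l1_nonneg g1]
  have e2 : L1 (fun x => (1/2) * ((if x i then (1:ℝ) else -1) * (g1 x - g0 x)))
      ≤ (1/2) * (L1 g1 + L1 g0) := by
    rw [l1_smul]
    have h1 : L1 (fun x => (if x i then (1:ℝ) else -1) * (g1 x - g0 x))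
        = L1 (fun x => g1 x - g0 x) := l1_mul_chr _ i
    have h2 := l1_sub_le g1 g0
    have : |(1:ℝ)/2| = 1/2 := by norm_num
    rw [this, h1]
    linarith
  linarith

end Fourier

-- the canonical-decision-tree leaf count
def Psi : List (Trm n) → (Fin n → Option Bool) → ℝ
  | [], _ => 1
  | t :: ts, ρ =>
    if fals t ρ then Psi ts ρ
    else if stars t ρ = ∅ then 1
    else ∑ y ∈ (stars t ρ).powerset,
      if y = stars t ρ ∩ t.A then 1 else Psi ts (setAll ρ (stars t ρ) y)

@[simp] lemma Psi_nil (ρ : Fin n → Option Bool) : Psi [] ρ = 1 := rfl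

lemma Psi_cons_fals {t : Trm n} {ts ρ} (h : fals t ρ) : Psi (t :: ts) ρ = Psi ts ρ := by
  simp [Psi, h]

lemma Psi_cons_sat {t : Trm n} {ts ρ} (h : ¬ fals t ρ) (h2 : stars t ρ = ∅) :
    Psi (t :: ts) ρ = 1 := by
  simp [Psi, h, h2]

lemma Psi_cons_alive {t : Trm n} {ts ρ} (h : ¬ fals t ρ) (h2 : stars t ρ ≠ ∅) :
    Psi (t :: ts) ρ = ∑ y ∈ (stars t ρ).powerset,
      if y = stars t ρ ∩ t.A then 1 else Psi ts (setAll ρ (stars t ρ) y) := by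
  simp [Psi, h, h2]

lemma Psi_nonneg : ∀ (L : List (Trm n)) (ρ), 0 ≤ Psi L ρ := by
  intro L
  induction L with
  | nil => intro ρ; simp
  | cons t ts ih =>
    intro ρ
    by_cases h : fals t ρ
    · rw [Psi_cons_fals h]; exact ih ρ
    by_cases h2 : stars t ρ = ∅
    · rw [Psi_cons_sat h h2]; norm_num
    · rw [Psi_cons_alive h h2]
      apply Finset.sum_nonneg
      intro y _
      split
      · norm_num
      · exact ih _

-- evaluation
def ov (ρ : Fin n → Option Bool) (x : Fin n → Bool) : Fin n → Bool :=
  fun i => (ρ i).getD (x i)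

lemma evalL_cons (t : Trm n) (ts x) :
    evalL (t :: ts) x = max (if sat t x then t.a else 0) (evalL ts x) := rfl

lemma evalL_le {L : List (Trm n)} {x c} (h : ∀ u ∈ L, u.a ≤ c) : evalL L x ≤ c := by
  induction L with
  | nil => exact Nat.zero_le c
  | cons t ts ih =>
    rw [evalL_cons]
    apply max_le
    · split
      · exact h t (List.mem_cons_self)
      · exact Nat.zero_le c
    · exact ih (fun u hu => h u (List.mem_cons_of_mem _ hu))

lemma not_sat_of_fals {t : Trm n} {ρ x} (h : fals t ρ) : ¬ sat t (ov ρ x) := by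
  rintro ⟨hA, hB⟩
  rcases h with ⟨i, hi, hv⟩ | ⟨j, hj, hv⟩
  · have := hA i hi
    rw [ov] at this
    rw [hv] at this
    simp at this
  · have := hB j hj
    rw [ov] at this
    rw [hv] at this
    simp at this

lemma sat_of_det {t : Trm n} {ρ} (hnf : ¬ fals t ρ) (hst : stars t ρ = ∅) (x) :
    sat t (ov ρ x) := by
  have hval : ∀ i ∈ t.V, ∃ b, ρ i = some b := by
    intro i hi
    cases hv : ρ i with
    | none =>
      exfalso
      have : i ∈ stars t ρ := Finset.mem_filter.2 ⟨hi, hv⟩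
      rw [hst] at this
      exact absurd this (Finset.notMem_empty i)
    | some b => exact ⟨b, rfl⟩
  constructor
  · intro i hi
    obtain ⟨b, hb⟩ := hval i (Finset.mem_union_left _ hi)
    cases b with
    | false => exact absurd (Or.inl ⟨i, hi, hb⟩) hnf
    | true => simp [ov, hb]
  · intro j hj
    obtain ⟨b, hb⟩ := hval j (Finset.mem_union_right _ hj)
    cases b with
    | true => exact absurd (Or.inr ⟨j, hj, hb⟩) hnf
    | false => simp [ov, hb]

lemma fals_setAll_ne {t : Trm n} {ρ : Fin n → Option Bool} {y : Finset (Fin n)}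
    (hy : y ⊆ stars t ρ) (hne : y ≠ stars t ρ ∩ t.A) :
    fals t (setAll ρ (stars t ρ) y) := by
  have : ∃ i ∈ stars t ρ, (i ∈ y ∧ i ∉ stars t ρ ∩ t.A) ∨ (i ∉ y ∧ i ∈ stars t ρ ∩ t.A) := by
    by_contra hc
    push_neg at hc
    apply hne
    ext i
    constructor
    · intro hiy
      have := hc i (hy hiy)
      tauto
    · intro hiA
      have := hc i (Finset.mem_inter.1 hiA).1
      tauto
  obtain ⟨i, hiY, hcase⟩ := this
  rcases hcase with ⟨hiy, hinA⟩ | ⟨hiny, hiA⟩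
  · -- i set to true but i ∈ B (since i ∉ A)
    have hiB : i ∈ t.B := by
      have hiV := stars_subset_V t ρ hiY
      rcases Finset.mem_union.1 hiV with h | h
      · exact absurd (Finset.mem_inter.2 ⟨hiY, h⟩) hinA
      · exact h
    refine Or.inr ⟨i, hiB, ?_⟩
    simp [setAll, hiY, hiy]
  · -- i ∈ A set to false
    have hiA' : i ∈ t.A := (Finset.mem_inter.1 hiA).2
    refine Or.inl ⟨i, hiA', ?_⟩
    simp [setAll, hiY, hiny]

-- block split
lemma setAll_empty (ρ : Fin n → Option Bool) (y : Finset (Fin n)) : setAll ρ ∅ y = ρ := by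
  funext i; simp [setAll]

lemma ov_update {ρ : Fin n → Option Bool} {i b} (h : ρ i = none) (x) :
    ov ρ (Function.update x i b) = ov (Function.update ρ i (some b)) x := by
  funext j
  by_cases hj : j = i
  · subst hj; simp [ov, h]
  · simp [ov, Function.update_of_ne hj]

lemma setAll_insert_notmem {ρ : Fin n → Option Bool} {i} {Y y : Finset (Fin n)}
    (hiY : i ∉ Y) (hiy : i ∉ y) :
    setAll ρ (insert i Y) y = setAll (Function.update ρ i (some false)) Y y := by
  funext j
  by_cases hj : j = i
  · subst hj
    simp [setAll, hiY, hiy]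
  · by_cases hjY : j ∈ Y
    · simp [setAll, hjY, Finset.mem_insert, hj]
    · simp [setAll, hjY, Finset.mem_insert, hj, Function.update_of_ne hj]

lemma setAll_insert_mem {ρ : Fin n → Option Bool} {i} {Y y : Finset (Fin n)}
    (hiY : i ∉ Y) (hiy : i ∉ y) :
    setAll ρ (insert i Y) (insert i y) =
      setAll (Function.update ρ i (some true)) Y y := by
  funext j
  by_cases hj : j = i
  · subst hj
    simp [setAll, hiY]
  · by_cases hjY : j ∈ Y
    · simp [setAll, hjY, Finset.mem_insert, hj]
    · simp [setAll, hjY, Finset.mem_insert, hj, Function.update_of_ne hj]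

lemma l1_block (f : (Fin n → Bool) → ℝ) :
    ∀ (Y : Finset (Fin n)) (ρ : Fin n → Option Bool), (∀ i ∈ Y, ρ i = none) →
    L1 (fun x => f (ov ρ x)) ≤ ∑ y ∈ Y.powerset, L1 (fun x => f (ov (setAll ρ Y y) x)) := by
  intro Y
  induction Y using Finset.induction_on with
  | empty =>
    intro ρ _
    simp [setAll_empty]
  | @insert i Y hiY ih =>
    intro ρ hnone
    have hρi : ρ i = none := hnone i (Finset.mem_insert_self i Y)
    have step := l1_split (fun x => f (ov ρ x)) i
    have e0 : (fun x => f (ov ρ (Function.update x i false)))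
        = fun x => f (ov (Function.update ρ i (some false)) x) := by
      funext x; rw [ov_update hρi]
    have e1 : (fun x => f (ov ρ (Function.update x i true)))
        = fun x => f (ov (Function.update ρ i (some true)) x) := by
      funext x; rw [ov_update hρi]
    rw [e0, e1] at step
    have hn0 : ∀ j ∈ Y, Function.update ρ i (some false) j = none := by
      intro j hj
      rw [Function.update_of_ne (by rintro rfl; exact hiY hj)]
      exact hnone j (Finset.mem_insert_of_mem hj)
    have hn1 : ∀ j ∈ Y, Function.update ρ i (some true) j = none := by
      intro j hj
      rw [Function.update_of_ne (by rintro rfl; exact hiY hj)]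
      exact hnone j (Finset.mem_insert_of_mem hj)
    have ih0 := ih (Function.update ρ i (some false)) hn0
    have ih1 := ih (Function.update ρ i (some true)) hn1
    rw [Finset.sum_powerset_insert hiY]
    have hc0 : ∑ y ∈ Y.powerset, L1 (fun x => f (ov (setAll (Function.update ρ i (some false)) Y y) x))
        = ∑ y ∈ Y.powerset, L1 (fun x => f (ov (setAll ρ (insert i Y) y) x)) := by
      apply Finset.sum_congr rfl
      intro y hy
      rw [setAll_insert_notmem hiY (fun hc => hiY (Finset.mem_powerset.1 hy hc))]
    have hc1 : ∑ y ∈ Y.powerset, L1 (fun x => f (ov (setAll (Function.update ρ i (some true)) Y y) x))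
        = ∑ y ∈ Y.powerset, L1 (fun x => f (ov (setAll ρ (insert i Y) (insert i y)) x)) := by
      apply Finset.sum_congr rfl
      intro y hy
      rw [setAll_insert_mem hiY (fun hc => hiY (Finset.mem_powerset.1 hy hc))]
    rw [hc0] at ih0
    rw [hc1] at ih1
    linarith

-- L1 of the restriction is at most the leaf count
section L1Psi
variable {r : ℕ}

lemma abs_leaf_le (hr : 1 ≤ r) {a : ℕ} (ha : a ≤ r) :
    |2 / (r : ℝ) * (a : ℕ) - 1| ≤ 1 := by
  have hr0 : 0 < r := hr
  have hr' : (0:ℝ) < r := by exact_mod_cast hr0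
  rw [abs_le]
  constructor
  · have : (0:ℝ) ≤ 2 / (r:ℝ) * (a:ℕ) := by positivity
    linarith
  · have haR : (a:ℝ) ≤ (r:ℝ) := by exact_mod_cast ha
    have h2 : 2 / (r:ℝ) * (a:ℕ) ≤ 2 := by
      rw [div_mul_eq_mul_div, div_le_iff₀ hr']
      nlinarith
    linarith

lemma l1_sat_case (hr : 1 ≤ r) {t : Trm n} {ts : List (Trm n)} {ρ}
    (hnf : ¬ fals t ρ) (hst : stars t ρ = ∅)
    (hhead : ∀ u ∈ ts, u.a ≤ t.a) (ha : t.a ≤ r) :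
    L1 (fun x => 2 / (r : ℝ) * (evalL (t :: ts) (ov ρ x) : ℝ) - 1) ≤ 1 := by
  have heval : ∀ x, evalL (t :: ts) (ov ρ x) = t.a := by
    intro x
    rw [evalL_cons, if_pos (sat_of_det hnf hst x)]
    exact max_eq_left (evalL_le hhead)
  have : (fun x => 2 / (r : ℝ) * (evalL (t :: ts) (ov ρ x) : ℝ) - 1)
      = fun _ => 2 / (r : ℝ) * (t.a : ℝ) - 1 := by
    funext x; rw [heval x]
  rw [this, l1_const]
  exact abs_leaf_le hr ha

lemma l1_le_Psi (hr : 1 ≤ r) :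
    ∀ (L : List (Trm n)), List.Pairwise (fun u v : Trm n => v.a ≤ u.a) L →
      (∀ t ∈ L, t.a ≤ r) → (∀ t ∈ L, Disjoint t.A t.B) → ∀ ρ,
      L1 (fun x => 2 / (r : ℝ) * (evalL L (ov ρ x) : ℝ) - 1) ≤ Psi L ρ := by
  intro L
  induction L with
  | nil =>
    intro _ _ _ ρ
    have : (fun x => 2 / (r : ℝ) * (evalL ([] : List (Trm n)) (ov ρ x) : ℝ) - 1)
        = fun _ => (-1 : ℝ) := by
      funext x
      simp [evalL]
    rw [this, l1_const]
    simp
  | cons t ts ih =>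
    intro hsort hbnd hdisj ρ
    have hsort' : List.Pairwise (fun u v : Trm n => v.a ≤ u.a) ts :=
      (List.pairwise_cons.1 hsort).2
    have hhead : ∀ u ∈ ts, u.a ≤ t.a := (List.pairwise_cons.1 hsort).1
    have hbnd' : ∀ u ∈ ts, u.a ≤ r := fun u hu => hbnd u (List.mem_cons_of_mem _ hu)
    have hdisj' : ∀ u ∈ ts, Disjoint u.A u.B := fun u hu => hdisj u (List.mem_cons_of_mem _ hu)
    by_cases hf : fals t ρ
    · rw [Psi_cons_fals hf]
      have heq : ∀ x, evalL (t :: ts) (ov ρ x) = evalL ts (ov ρ x) := by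
        intro x
        rw [evalL_cons, if_neg (not_sat_of_fals hf), Nat.zero_max]
      have : (fun x => 2 / (r : ℝ) * (evalL (t :: ts) (ov ρ x) : ℝ) - 1)
          = fun x => 2 / (r : ℝ) * (evalL ts (ov ρ x) : ℝ) - 1 := by
        funext x; rw [heq x]
      rw [this]
      exact ih hsort' hbnd' hdisj' ρ
    by_cases hs : stars t ρ = ∅
    · rw [Psi_cons_sat hf hs]
      exact l1_sat_case hr hf hs hhead (hbnd t (List.mem_cons_self))
    · rw [Psi_cons_alive hf hs]
      have hnone : ∀ i ∈ stars t ρ, ρ i = none := fun i hi => mem_stars_none hi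
      refine le_trans (l1_block (fun z => 2 / (r : ℝ) * (evalL (t :: ts) z : ℝ) - 1)
        (stars t ρ) ρ hnone) ?_
      apply Finset.sum_le_sum
      intro y hy
      by_cases hcase : y = stars t ρ ∩ t.A
      · rw [if_pos hcase]
        subst hcase
        obtain ⟨hnf', hst', _⟩ := ct1 (t := t) (ρ := ρ)
          (hdisj t (List.mem_cons_self)) hf rfl
        exact l1_sat_case hr hnf' hst' hhead (hbnd t (List.mem_cons_self))
      · rw [if_neg hcase]
        have hfals : fals t (setAll ρ (stars t ρ) y) :=
          fals_setAll_ne (Finset.mem_powerset.1 hy) hcase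
        have heq : ∀ x, evalL (t :: ts) (ov (setAll ρ (stars t ρ) y) x)
            = evalL ts (ov (setAll ρ (stars t ρ) y) x) := by
          intro x
          rw [evalL_cons, if_neg (not_sat_of_fals hfals), Nat.zero_max]
        have : (fun x => 2 / (r : ℝ) * (evalL (t :: ts) (ov (setAll ρ (stars t ρ) y) x) : ℝ) - 1)
            = fun x => 2 / (r : ℝ) * (evalL ts (ov (setAll ρ (stars t ρ) y) x) : ℝ) - 1 := by
          funext x; rw [heq x]
        rw [this]
        exact ih hsort' hbnd' hdisj' _
end L1Psi

-- numeric lemmas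
section Numeric

lemma pow_mul_one_sub_le (x : ℝ) (hx : 0 ≤ x) : ∀ m : ℕ, (1 + x) ^ m * (1 - m * x) ≤ 1 := by
  intro m
  induction m with
  | zero => simp
  | succ j ih =>
    have h1 : (1 + x) ^ (j+1) * (1 - (j+1 : ℕ) * x)
        = (1 + x) ^ j * ((1 + x) * (1 - (j+1 : ℕ) * x)) := by ring
    have h2 : (1 + x) * (1 - (j+1 : ℕ) * x) ≤ 1 - (j : ℕ) * x := by
      push_cast
      have hp : (0:ℝ) ≤ ((j:ℝ)+1) * x^2 := by positivity
      nlinarith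
    have h3 : (0:ℝ) ≤ (1 + x) ^ j := by positivity
    calc (1 + x) ^ (j+1) * (1 - (j+1 : ℕ) * x)
        = (1 + x) ^ j * ((1 + x) * (1 - (j+1 : ℕ) * x)) := h1
      _ ≤ (1 + x) ^ j * (1 - (j : ℕ) * x) := by
          exact mul_le_mul_of_nonneg_left h2 h3
      _ ≤ 1 := ih

lemma sum_powerset_pow {α : Type*} [DecidableEq α] (x : ℝ) :
    ∀ S : Finset α, ∑ Y ∈ S.powerset, x ^ Y.card = (1 + x) ^ S.card := by
  intro S
  induction S using Finset.induction_on with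
  | empty => simp
  | @insert a S ha ih =>
    rw [Finset.sum_powerset_insert ha, Finset.card_insert_of_notMem ha]
    have h2 : ∑ Y ∈ S.powerset, x ^ (insert a Y).card
        = x * ∑ Y ∈ S.powerset, x ^ Y.card := by
      rw [Finset.mul_sum]
      apply Finset.sum_congr rfl
      intro Y hY
      rw [Finset.card_insert_of_notMem (fun hc => ha (Finset.mem_powerset.1 hY hc))]
      ring
    rw [h2, ih]
    ring

lemma key_numeric {α : Type*} [DecidableEq α] {k : ℕ} {z : ℝ} (hz : 0 ≤ z)
    (hβ : (1 + 2 * z) ^ k ≤ 3 / 2) {S : Finset α} (hcard : S.card ≤ k) :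
    ∑ Y ∈ S.powerset.erase ∅, z ^ Y.card * (2 * (2:ℝ) ^ Y.card - 1) ≤ 1 := by
  have step1 : ∑ Y ∈ S.powerset.erase ∅, z ^ Y.card * (2 * (2:ℝ) ^ Y.card - 1)
      ≤ ∑ Y ∈ S.powerset.erase ∅, 2 * (2 * z) ^ Y.card := by
    apply Finset.sum_le_sum
    intro Y _
    have h1 : (0:ℝ) ≤ z ^ Y.card := by positivity
    have h2 : (2 * z) ^ Y.card = 2 ^ Y.card * z ^ Y.card := by rw [mul_pow]
    nlinarith [pow_nonneg (by norm_num : (0:ℝ) ≤ 2) Y.card]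
  have hmem : (∅ : Finset α) ∈ S.powerset := Finset.empty_mem_powerset S
  have step2 : ∑ Y ∈ S.powerset.erase ∅, 2 * (2 * z) ^ Y.card
      = 2 * ((1 + 2*z) ^ S.card - 1) := by
    have := Finset.add_sum_erase _ (fun Y : Finset α => 2 * (2 * z) ^ Y.card) hmem
    have hfull : ∑ Y ∈ S.powerset, 2 * (2 * z) ^ Y.card = 2 * (1 + 2*z) ^ S.card := by
      rw [← Finset.mul_sum, sum_powerset_pow]
    rw [← this] at hfull
    simp only [Finset.card_empty, pow_zero, mul_one] at hfull
    linarith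
  have step3 : (1 + 2*z) ^ S.card ≤ (1 + 2*z) ^ k := by
    apply pow_le_pow_right₀ (by linarith) hcard
  calc ∑ Y ∈ S.powerset.erase ∅, z ^ Y.card * (2 * (2:ℝ) ^ Y.card - 1)
      ≤ 2 * ((1 + 2*z) ^ S.card - 1) := by rw [← step2]; exact step1
    _ ≤ 2 * ((1 + 2*z) ^ k - 1) := by linarith
    _ ≤ 1 := by linarith

end Numeric

-- auxiliary transfer lemmas for the main induction
lemma setAll_id_of_satSet {t : Trm n} {ρh : Fin n → Option Bool} {Y : Finset (Fin n)}
    (hY : Y ⊆ satSet t ρh) : setAll ρh Y (Y ∩ t.A) = ρh := by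
  have := ct3b (ρh := ρh) hY
  rwa [setAll_unsetAll] at this

lemma ext_setAll {σ σh : Fin n → Option Bool} {Y y : Finset (Fin n)} (h : Ext σ σh) :
    Ext (setAll σ Y y) (setAll σh Y y) := by
  intro i b hb
  by_cases hi : i ∈ Y
  · simp only [setAll, hi, if_pos] at hb ⊢
    exact hb
  · simp only [setAll, hi, if_neg] at hb ⊢
    exact h i b hb

lemma powerset_eq_filter_univ {α : Type*} [Fintype α] [DecidableEq α] (S : Finset α) :
    (Finset.univ : Finset (Finset α)).filter (fun Y => Y ⊆ S) = S.powerset := by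
  ext Y
  simp [Finset.mem_powerset]

-- main expectation bound
section MainInd
variable {p : ℝ}

def blockSum (ts : List (Trm n)) (t : Trm n) (ρ : Fin n → Option Bool)
    (Y : Finset (Fin n)) : ℝ :=
  ∑ y ∈ Y.powerset, if y = Y ∩ t.A then (1:ℝ) else Psi ts (setAll ρ Y y)


def TTpred (t : Trm n) (Y : Finset (Fin n)) (ρh : Fin n → Option Bool) : Prop :=
  ¬ fals t ρh ∧ stars t ρh = ∅ ∧ Y ⊆ satSet t ρh

lemma satSet_some {t : Trm n} {ρh : Fin n → Option Bool} {Y : Finset (Fin n)}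
    (hY : Y ⊆ satSet t ρh) : ∀ i ∈ Y, ρh i ≠ none := by
  intro i hi
  rw [(Finset.mem_filter.1 (hY hi)).2]
  simp

lemma step_y {p : ℝ} {k : ℕ} (hp0 : 0 ≤ p) (hp1 : p < 1) (t : Trm n) (ts : List (Trm n))
    (Y y : Finset (Fin n))
    (φ φh : (Fin n → Option Bool) → ℝ)
    (hφ : ∀ ρ, 0 ≤ φ ρ) (hφh : ∀ ρ, 0 ≤ φh ρ)
    (hc : ∀ ρ σ, Ext ρ σ → φ ρ ≤ φh σ)
    (IH : ∀ φ φh : (Fin n → Option Bool) → ℝ,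
      (∀ ρ, 0 ≤ φ ρ) → (∀ ρ, 0 ≤ φh ρ) → (∀ ρ σ, Ext ρ σ → φ ρ ≤ φh σ) →
      ∑ ρ : Fin n → Option Bool, W p ρ * (φ ρ * Psi ts ρ)
        ≤ 2 * ∑ ρ : Fin n → Option Bool, W p ρ * φh ρ) :
    ∑ ρh ∈ Finset.univ.filter (TTpred t Y),
        W p ρh * (φ (unsetAll ρh Y) * Psi ts (setAll ρh Y y))
      ≤ 2 * ∑ ρh ∈ Finset.univ.filter (TTpred t Y), W p ρh * φh ρh := by
  classical
  set s := Y ∩ t.A with hs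
  set Dyy : (Fin n → Option Bool) → Prop :=
    fun σ => TTpred t Y (setAll σ Y s) ∧ ∀ i ∈ Y, σ i = some (decide (i ∈ y)) with hDyy
  -- change of variables ρh ↦ setAll ρh Y y
  have hstep1 : ∑ ρh ∈ Finset.univ.filter (TTpred t Y),
      W p ρh * (φ (unsetAll ρh Y) * Psi ts (setAll ρh Y y))
      = ∑ σ ∈ Finset.univ.filter Dyy, W p σ * (φ (unsetAll σ Y) * Psi ts σ) := by
    apply Finset.sum_nbij' (fun ρh => setAll ρh Y y) (fun σ => setAll σ Y s)
    · intro ρh hρh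
      rw [Finset.mem_filter] at hρh ⊢
      obtain ⟨-, hpred⟩ := hρh
      have hid : setAll (setAll ρh Y y) Y s = ρh := by
        rw [setAll_setAll, hs, setAll_id_of_satSet hpred.2.2]
      refine ⟨Finset.mem_univ _, ?_, ?_⟩
      · rw [hid]; exact hpred
      · intro i hi; simp [setAll, hi]
    · intro σ hσ
      rw [Finset.mem_filter] at hσ ⊢
      exact ⟨Finset.mem_univ _, hσ.2.1⟩
    · intro ρh hρh
      rw [Finset.mem_filter] at hρh
      rw [setAll_setAll, hs, setAll_id_of_satSet hρh.2.2.2]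
    · intro σ hσ
      rw [Finset.mem_filter] at hσ
      rw [setAll_setAll]
      exact setAll_eq_self hσ.2.2
    · intro ρh hρh
      rw [Finset.mem_filter] at hρh
      have h1 : W p (setAll ρh Y y) = W p ρh := W_setAll_of_some (satSet_some hρh.2.2.2)
      rw [h1, unsetAll_setAll]
  rw [hstep1]
  -- apply the induction hypothesis with indicator-modified weights
  set φ2 : (Fin n → Option Bool) → ℝ :=
    fun σ => if Dyy σ then φ (unsetAll σ Y) else 0 with hφ2
  set φh2 : (Fin n → Option Bool) → ℝ :=
    fun σh => if Dyy σh then φh (setAll σh Y s) else 0 with hφh2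
  have hDyy_mono : ∀ σ σh, Ext σ σh → Dyy σ → Dyy σh := by
    intro σ σh hext hD
    obtain ⟨⟨hnf, hst, hsub⟩, hvals⟩ := hD
    have hagree : agreeOn t.V (setAll σ Y s) (setAll σh Y s) := by
      intro i hi
      by_cases hiY : i ∈ Y
      · simp [setAll, hiY]
      · simp only [setAll, hiY, if_neg]
        cases hv : σ i with
        | none =>
          exfalso
          have : i ∈ stars t (setAll σ Y s) :=
            Finset.mem_filter.2 ⟨hi, by simp [setAll, hiY, hv]⟩
          rw [hst] at this
          exact absurd this (Finset.notMem_empty i)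
        | some b => rw [hext i b hv]
    refine ⟨⟨?_, ?_, ?_⟩, ?_⟩
    · rw [← fals_congr hagree]; exact hnf
    · rw [← stars_congr hagree]; exact hst
    · rw [← satSet_congr hagree]; exact hsub
    · intro i hi
      exact hext i _ (hvals i hi)
  have hIH := IH φ2 φh2
    (by intro σ; rw [hφ2]; dsimp only; split; exacts [hφ _, le_refl 0])
    (by intro σ; rw [hφh2]; dsimp only; split; exacts [hφh _, le_refl 0])
    (by
      intro σ σh hext
      rw [hφ2, hφh2]; dsimp only
      by_cases hD : Dyy σ
      · rw [if_pos hD, if_pos (hDyy_mono σ σh hext hD)]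
        exact hc _ _ (ext_unsetAll_setAll hext)
      · rw [if_neg hD]
        split
        · exact hφh _
        · exact le_refl 0)
  have hL : ∑ σ : Fin n → Option Bool, W p σ * (φ2 σ * Psi ts σ)
      = ∑ σ ∈ Finset.univ.filter Dyy, W p σ * (φ (unsetAll σ Y) * Psi ts σ) := by
    rw [Finset.sum_filter]
    apply Finset.sum_congr rfl
    intro σ _
    rw [hφ2]; dsimp only
    split
    · rfl
    · simp
  have hR : ∑ σh : Fin n → Option Bool, W p σh * φh2 σh
      ≤ ∑ ρh ∈ Finset.univ.filter (TTpred t Y), W p ρh * φh ρh := by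
    have h1 : ∑ σh : Fin n → Option Bool, W p σh * φh2 σh
        = ∑ σh ∈ Finset.univ.filter Dyy, W p σh * φh (setAll σh Y s) := by
      rw [Finset.sum_filter]
      apply Finset.sum_congr rfl
      intro σh _
      rw [hφh2]; dsimp only
      split
      · rfl
      · simp
    have hinj : Set.InjOn (fun σh => setAll σh Y s) (Finset.univ.filter Dyy) := by
      intro σ1 h1' σ2 h2' heq
      simp only [Finset.coe_filter, Set.mem_setOf_eq] at h1' h2'
      have heq' : setAll σ1 Y s = setAll σ2 Y s := heq
      have e1 : setAll (setAll σ1 Y s) Y y = σ1 := by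
        rw [setAll_setAll]; exact setAll_eq_self h1'.2.2
      have e2 : setAll (setAll σ2 Y s) Y y = σ2 := by
        rw [setAll_setAll]; exact setAll_eq_self h2'.2.2
      rw [← e1, ← e2, heq']
    have h2 : ∑ σh ∈ Finset.univ.filter Dyy, W p σh * φh (setAll σh Y s)
        = ∑ ρh ∈ (Finset.univ.filter Dyy).image (fun σh => setAll σh Y s),
            W p ρh * φh ρh := by
      rw [Finset.sum_image (fun a ha b hb hab => hinj (by simpa using ha) (by simpa using hb) hab)]
      apply Finset.sum_congr rfl
      intro σh hσh
      rw [Finset.mem_filter] at hσh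
      have : W p (setAll σh Y s) = W p σh := by
        apply W_setAll_of_some
        intro i hi
        rw [hσh.2.2 i hi]
        simp
      rw [this]
    rw [h1, h2]
    apply Finset.sum_le_sum_of_subset_of_nonneg
    · intro ρh hρh
      rw [Finset.mem_image] at hρh
      obtain ⟨σh, hσh, rfl⟩ := hρh
      rw [Finset.mem_filter] at hσh
      rw [Finset.mem_filter]
      exact ⟨Finset.mem_univ _, hσh.2.1⟩
    · intro ρh _ _
      exact mul_nonneg (W_nonneg hp0 hp1.le ρh) (hφh ρh)
  rw [hL] at hIH
  calc ∑ σ ∈ Finset.univ.filter Dyy, W p σ * (φ (unsetAll σ Y) * Psi ts σ)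
      ≤ 2 * ∑ σh : Fin n → Option Bool, W p σh * φh2 σh := hIH
    _ ≤ 2 * ∑ ρh ∈ Finset.univ.filter (TTpred t Y), W p ρh * φh ρh := by linarith


lemma step_Y {p : ℝ} {k : ℕ} (hp0 : 0 ≤ p) (hp1 : p < 1) (t : Trm n) (ts : List (Trm n))
    (hdisj : Disjoint t.A t.B) (Y : Finset (Fin n))
    (φ φh : (Fin n → Option Bool) → ℝ)
    (hφ : ∀ ρ, 0 ≤ φ ρ) (hφh : ∀ ρ, 0 ≤ φh ρ)
    (hc : ∀ ρ σ, Ext ρ σ → φ ρ ≤ φh σ)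
    (IH : ∀ φ φh : (Fin n → Option Bool) → ℝ,
      (∀ ρ, 0 ≤ φ ρ) → (∀ ρ, 0 ≤ φh ρ) → (∀ ρ σ, Ext ρ σ → φ ρ ≤ φh σ) →
      ∑ ρ : Fin n → Option Bool, W p ρ * (φ ρ * Psi ts ρ)
        ≤ 2 * ∑ ρ : Fin n → Option Bool, W p ρ * φh ρ) :
    ∑ ρ ∈ Finset.univ.filter (fun ρ => ¬ fals t ρ ∧ stars t ρ = Y),
        W p ρ * (φ ρ * blockSum ts t ρ Y)
      ≤ (2 * p / (1 - p)) ^ Y.card * ((2 * (2:ℝ) ^ Y.card - 1) *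
          ∑ ρh ∈ Finset.univ.filter (TTpred t Y), W p ρh * φh ρh) := by
  classical
  have hz : (0:ℝ) ≤ 2 * p / (1 - p) := by
    apply div_nonneg (by linarith) (by linarith)
  -- change of variables ρ ↦ setAll ρ Y (Y ∩ t.A)
  have hstep1 : ∑ ρ ∈ Finset.univ.filter (fun ρ => ¬ fals t ρ ∧ stars t ρ = Y),
      W p ρ * (φ ρ * blockSum ts t ρ Y)
      = ∑ ρh ∈ Finset.univ.filter (TTpred t Y),
          (2 * p / (1 - p)) ^ Y.card *
            (W p ρh * (φ (unsetAll ρh Y) * blockSum ts t (unsetAll ρh Y) Y)) := by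
    apply Finset.sum_nbij' (fun ρ => setAll ρ Y (Y ∩ t.A)) (fun ρh => unsetAll ρh Y)
    · intro ρ hρ
      rw [Finset.mem_filter] at hρ ⊢
      obtain ⟨-, hnf, hst⟩ := hρ
      obtain ⟨h1, h2, h3⟩ := ct1 hdisj hnf hst
      exact ⟨Finset.mem_univ _, h1, h2, h3⟩
    · intro ρh hρh
      rw [Finset.mem_filter] at hρh ⊢
      obtain ⟨-, hnf, hst, hsub⟩ := hρh
      obtain ⟨h1, h2⟩ := ct2 hnf hst hsub
      exact ⟨Finset.mem_univ _, h1, h2⟩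
    · intro ρ hρ
      rw [Finset.mem_filter] at hρ
      exact ct3a hρ.2.2
    · intro ρh hρh
      rw [Finset.mem_filter] at hρh
      exact ct3b hρh.2.2.2
    · intro ρ hρ
      rw [Finset.mem_filter] at hρ
      have hnone : ∀ i ∈ Y, ρ i = none := by
        intro i hi
        exact mem_stars_none (hρ.2.2 ▸ hi)
      have hW : W p ρ = (2 * p / (1 - p)) ^ Y.card * W p (setAll ρ Y (Y ∩ t.A)) :=
        W_setAll_of_none hp1 hnone
      rw [hW, ct3a hρ.2.2]
      ring
  rw [hstep1]
  -- rewrite the block sums and exchange summation order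
  have hbs : ∀ ρh ∈ Finset.univ.filter (TTpred t Y),
      (2 * p / (1 - p)) ^ Y.card *
        (W p ρh * (φ (unsetAll ρh Y) * blockSum ts t (unsetAll ρh Y) Y))
      = ∑ y ∈ Y.powerset, (2 * p / (1 - p)) ^ Y.card *
          (W p ρh * (φ (unsetAll ρh Y) *
            (if y = Y ∩ t.A then (1:ℝ) else Psi ts (setAll ρh Y y)))) := by
    intro ρh _
    unfold blockSum
    rw [Finset.mul_sum, Finset.mul_sum, Finset.mul_sum]
    apply Finset.sum_congr rfl
    intro y _
    by_cases hy : y = Y ∩ t.A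
    · simp [hy]
    · simp only [if_neg hy, setAll_unsetAll]
  rw [Finset.sum_congr rfl hbs, Finset.sum_comm]
  -- bound each inner sum
  set M := ∑ ρh ∈ Finset.univ.filter (TTpred t Y), W p ρh * φh ρh with hM
  have hMnn : 0 ≤ M := by
    rw [hM]
    exact Finset.sum_nonneg fun ρh _ =>
      mul_nonneg (W_nonneg hp0 hp1.le ρh) (hφh ρh)
  have hper : ∀ y ∈ Y.powerset,
      ∑ ρh ∈ Finset.univ.filter (TTpred t Y),
        (2 * p / (1 - p)) ^ Y.card *
          (W p ρh * (φ (unsetAll ρh Y) *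
            (if y = Y ∩ t.A then (1:ℝ) else Psi ts (setAll ρh Y y))))
      ≤ (2 * p / (1 - p)) ^ Y.card * (if y = Y ∩ t.A then M else 2 * M) := by
    intro y _
    rw [← Finset.mul_sum]
    apply mul_le_mul_of_nonneg_left _ (pow_nonneg hz _)
    by_cases hy : y = Y ∩ t.A
    · simp only [if_pos hy]
      rw [hM]
      apply Finset.sum_le_sum
      intro ρh _
      rw [mul_one]
      exact mul_le_mul_of_nonneg_left (hc _ _ (ext_unsetAll ρh Y)) (W_nonneg hp0 hp1.le ρh)
    · simp only [if_neg hy]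
      exact step_y (k := k) hp0 hp1 t ts Y y φ φh hφ hφh hc IH
  refine le_trans (Finset.sum_le_sum hper) ?_
  -- sum the per-y bounds
  have hcount : ∑ y ∈ Y.powerset,
      (2 * p / (1 - p)) ^ Y.card * (if y = Y ∩ t.A then M else 2 * M)
      = (2 * p / (1 - p)) ^ Y.card * ((2 * (2:ℝ) ^ Y.card - 1) * M) := by
    rw [← Finset.mul_sum]
    congr 1
    have h1 : ∀ y ∈ Y.powerset, (if y = Y ∩ t.A then M else 2 * M)
        = 2 * M - (if y = Y ∩ t.A then M else 0) := by
      intro y _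
      split <;> ring
    rw [Finset.sum_congr rfl h1, Finset.sum_sub_distrib, Finset.sum_const,
      Finset.sum_ite_eq' Y.powerset (Y ∩ t.A) (fun _ => M),
      if_pos (Finset.mem_powerset.2 Finset.inter_subset_left), Finset.card_powerset]
    push_cast
    ring
  rw [hcount]

lemma main_ind {k : ℕ} (hp0 : 0 ≤ p) (hp1 : p < 1)
    (hβ : (1 + 2 * (2 * p / (1 - p))) ^ k ≤ 3 / 2) :
    ∀ L : List (Trm n), (∀ t ∈ L, t.V.card ≤ k ∧ Disjoint t.A t.B) →
    ∀ φ φh : (Fin n → Option Bool) → ℝ,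
      (∀ ρ, 0 ≤ φ ρ) → (∀ ρ, 0 ≤ φh ρ) → (∀ ρ σ, Ext ρ σ → φ ρ ≤ φh σ) →
      ∑ ρ : Fin n → Option Bool, W p ρ * (φ ρ * Psi L ρ)
        ≤ 2 * ∑ ρ : Fin n → Option Bool, W p ρ * φh ρ := by
  intro L
  induction L with
  | nil =>
    intro _ φ φh hφ hφh hc
    have h1 : ∑ ρ : Fin n → Option Bool, W p ρ * (φ ρ * Psi [] ρ)
        ≤ ∑ ρ : Fin n → Option Bool, W p ρ * φh ρ := by
      apply Finset.sum_le_sum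
      intro ρ _
      rw [Psi_nil, mul_one]
      exact mul_le_mul_of_nonneg_left (hc ρ ρ (Ext.refl ρ)) (W_nonneg hp0 hp1.le ρ)
    have h2 : (0:ℝ) ≤ ∑ ρ : Fin n → Option Bool, W p ρ * φh ρ :=
      Finset.sum_nonneg fun ρ _ => mul_nonneg (W_nonneg hp0 hp1.le ρ) (hφh ρ)
    linarith
  | cons t ts ih =>
    intro hgood φ φh hφ hφh hc
    have hwid : t.V.card ≤ k := (hgood t (List.mem_cons_self)).1
    have hdisj : Disjoint t.A t.B := (hgood t (List.mem_cons_self)).2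
    have htail : ∀ u ∈ ts, u.V.card ≤ k ∧ Disjoint u.A u.B :=
      fun u hu => hgood u (List.mem_cons_of_mem _ hu)
    have hWnn : ∀ ρ : Fin n → Option Bool, 0 ≤ W p ρ := W_nonneg hp0 hp1.le
    -- decomposition of the left-hand side
    have decomp : ∀ ρ : Fin n → Option Bool, W p ρ * (φ ρ * Psi (t :: ts) ρ) =
        W p ρ * ((if fals t ρ then φ ρ else 0) * Psi ts ρ)
        + W p ρ * (if ¬ fals t ρ ∧ stars t ρ = ∅ then φ ρ else 0)
        + W p ρ * (if ¬ fals t ρ ∧ stars t ρ ≠ ∅ then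
            φ ρ * blockSum ts t ρ (stars t ρ) else 0) := by
      intro ρ
      by_cases h1 : fals t ρ
      · rw [Psi_cons_fals h1]
        simp [h1]
      · by_cases h2 : stars t ρ = ∅
        · rw [Psi_cons_sat h1 h2]
          simp [h1, h2]
        · rw [Psi_cons_alive h1 h2]
          simp [h1, h2, blockSum]
    have hsplit : ∑ ρ : Fin n → Option Bool, W p ρ * (φ ρ * Psi (t :: ts) ρ)
        = (∑ ρ : Fin n → Option Bool, W p ρ * ((if fals t ρ then φ ρ else 0) * Psi ts ρ))
        + (∑ ρ : Fin n → Option Bool, W p ρ * (if ¬ fals t ρ ∧ stars t ρ = ∅ then φ ρ else 0))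
        + (∑ ρ : Fin n → Option Bool, W p ρ * (if ¬ fals t ρ ∧ stars t ρ ≠ ∅ then
            φ ρ * blockSum ts t ρ (stars t ρ) else 0)) := by
      rw [← Finset.sum_add_distrib, ← Finset.sum_add_distrib]
      exact Finset.sum_congr rfl fun ρ _ => decomp ρ
    -- part 1 : falsified part, via the induction hypothesis
    have hpart1 : (∑ ρ : Fin n → Option Bool, W p ρ * ((if fals t ρ then φ ρ else 0) * Psi ts ρ))
        ≤ 2 * ∑ ρ : Fin n → Option Bool, W p ρ * (if fals t ρ then φh ρ else 0) := by
      apply ih htail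
      · intro ρ; split
        · exact hφ ρ
        · exact le_refl 0
      · intro ρ; split
        · exact hφh ρ
        · exact le_refl 0
      · intro ρ σ hext
        by_cases h : fals t ρ
        · rw [if_pos h, if_pos (Ext.fals_mono hext h)]
          exact hc ρ σ hext
        · rw [if_neg h]
          split
          · exact hφh σ
          · exact le_refl 0
    -- part 2 : determined satisfied part
    have hpart2 : (∑ ρ : Fin n → Option Bool, W p ρ * (if ¬ fals t ρ ∧ stars t ρ = ∅ then φ ρ else 0))
        ≤ ∑ ρ : Fin n → Option Bool, W p ρ * (if ¬ fals t ρ ∧ stars t ρ = ∅ then φh ρ else 0) := by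
      apply Finset.sum_le_sum
      intro ρ _
      apply mul_le_mul_of_nonneg_left _ (hWnn ρ)
      split
      · exact hc ρ ρ (Ext.refl ρ)
      · exact le_refl 0
    -- part 3 : alive part (the core re-encoding step)
    have hpart3 : (∑ ρ : Fin n → Option Bool, W p ρ * (if ¬ fals t ρ ∧ stars t ρ ≠ ∅ then
            φ ρ * blockSum ts t ρ (stars t ρ) else 0))
        ≤ ∑ ρ : Fin n → Option Bool, W p ρ * (if ¬ fals t ρ ∧ stars t ρ = ∅ then φh ρ else 0) := by
      classical
      -- move to filtered form
      have e0 : ∀ ρ : Fin n → Option Bool,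
          W p ρ * (if ¬ fals t ρ ∧ stars t ρ ≠ ∅ then φ ρ * blockSum ts t ρ (stars t ρ) else 0)
          = (if ¬ fals t ρ ∧ stars t ρ ≠ ∅ then
              W p ρ * (φ ρ * blockSum ts t ρ (stars t ρ)) else 0) := by
        intro ρ; split <;> simp
      rw [Finset.sum_congr rfl (fun ρ _ => e0 ρ), ← Finset.sum_filter]
      -- fiberwise over the star set
      rw [← Finset.sum_fiberwise (Finset.univ.filter (fun ρ => ¬ fals t ρ ∧ stars t ρ ≠ ∅))
        (stars t) (fun ρ => W p ρ * (φ ρ * blockSum ts t ρ (stars t ρ)))]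
      -- bound each fiber
      have hfiber : ∀ Y : Finset (Fin n),
          ∑ ρ ∈ (Finset.univ.filter (fun ρ => ¬ fals t ρ ∧ stars t ρ ≠ ∅)).filter
              (fun ρ => stars t ρ = Y),
            W p ρ * (φ ρ * blockSum ts t ρ (stars t ρ))
          ≤ (if Y = ∅ then 0 else (2 * p / (1 - p)) ^ Y.card * ((2 * (2:ℝ) ^ Y.card - 1) *
              ∑ ρh ∈ Finset.univ.filter (TTpred t Y), W p ρh * φh ρh)) := by
        intro Y
        by_cases hY : Y = ∅
        · subst hY
          rw [if_pos rfl]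
          have : (Finset.univ.filter (fun ρ => ¬ fals t ρ ∧ stars t ρ ≠ ∅)).filter
              (fun ρ => stars t ρ = ∅) = ∅ := by
            apply Finset.filter_false_of_mem
            intro ρ hρ
            rw [Finset.mem_filter] at hρ
            exact hρ.2.2
          rw [this, Finset.sum_empty]
        · rw [if_neg hY]
          have hset : (Finset.univ.filter (fun ρ => ¬ fals t ρ ∧ stars t ρ ≠ ∅)).filter
              (fun ρ => stars t ρ = Y)
              = Finset.univ.filter (fun ρ => ¬ fals t ρ ∧ stars t ρ = Y) := by
            rw [Finset.filter_filter]
            apply Finset.filter_congr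
            intro ρ _
            constructor
            · rintro ⟨⟨h1, _⟩, h3⟩; exact ⟨h1, h3⟩
            · rintro ⟨h1, h3⟩; exact ⟨⟨h1, h3 ▸ hY⟩, h3⟩
          rw [hset]
          have hbs : ∀ ρ ∈ Finset.univ.filter (fun ρ => ¬ fals t ρ ∧ stars t ρ = Y),
              W p ρ * (φ ρ * blockSum ts t ρ (stars t ρ))
              = W p ρ * (φ ρ * blockSum ts t ρ Y) := by
            intro ρ hρ
            rw [Finset.mem_filter] at hρ
            rw [hρ.2.2]
          rw [Finset.sum_congr rfl hbs]
          exact step_Y (k := k) hp0 hp1 t ts hdisj Y φ φh hφ hφh hc (ih htail)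
      refine le_trans (Finset.sum_le_sum (fun Y _ => hfiber Y)) ?_
      -- final aggregation over Y
      have hexp : ∀ Y : Finset (Fin n),
          (if Y = ∅ then (0:ℝ) else (2 * p / (1 - p)) ^ Y.card * ((2 * (2:ℝ) ^ Y.card - 1) *
              ∑ ρh ∈ Finset.univ.filter (TTpred t Y), W p ρh * φh ρh))
          = ∑ ρh : Fin n → Option Bool,
              (if Y = ∅ then (0:ℝ) else (2 * p / (1 - p)) ^ Y.card * ((2 * (2:ℝ) ^ Y.card - 1) *
                (if TTpred t Y ρh then W p ρh * φh ρh else 0))) := by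
        intro Y
        by_cases hY : Y = ∅
        · simp [hY]
        · simp only [if_neg hY]
          rw [← Finset.mul_sum, ← Finset.mul_sum, ← Finset.sum_filter]
      rw [Finset.sum_congr rfl (fun Y _ => hexp Y), Finset.sum_comm]
      apply Finset.sum_le_sum
      intro ρh _
      by_cases hb : ¬ fals t ρh ∧ stars t ρh = ∅
      · rw [if_pos hb]
        have hTT : ∀ Y : Finset (Fin n), TTpred t Y ρh ↔ Y ⊆ satSet t ρh := by
          intro Y
          constructor
          · rintro ⟨-, -, h3⟩; exact h3
          · intro h3; exact ⟨hb.1, hb.2, h3⟩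
        have hWφh : 0 ≤ W p ρh * φh ρh := mul_nonneg (hWnn ρh) (hφh ρh)
        have hval : ∀ Y : Finset (Fin n),
            (if Y = ∅ then (0:ℝ) else (2 * p / (1 - p)) ^ Y.card * ((2 * (2:ℝ) ^ Y.card - 1) *
              (if TTpred t Y ρh then W p ρh * φh ρh else 0)))
            = (if Y ⊆ satSet t ρh then
                (if Y = ∅ then (0:ℝ) else (2 * p / (1 - p)) ^ Y.card * (2 * (2:ℝ) ^ Y.card - 1))
                  * (W p ρh * φh ρh) else 0) := by
          intro Y
          by_cases h1 : Y ⊆ satSet t ρh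
          · rw [if_pos h1, if_pos ((hTT Y).2 h1)]
            by_cases h2 : Y = ∅
            · simp [h2]
            · rw [if_neg h2, if_neg h2]
              ring
          · rw [if_neg h1]
            have : ¬ TTpred t Y ρh := fun hcon => h1 ((hTT Y).1 hcon)
            rw [if_neg this]
            split <;> ring
        rw [Finset.sum_congr rfl (fun Y _ => hval Y), ← Finset.sum_filter,
          powerset_eq_filter_univ]
        have herase : ∑ Y ∈ (satSet t ρh).powerset,
            (if Y = ∅ then (0:ℝ) else (2 * p / (1 - p)) ^ Y.card * (2 * (2:ℝ) ^ Y.card - 1))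
              * (W p ρh * φh ρh)
            = ∑ Y ∈ (satSet t ρh).powerset.erase ∅,
              ((2 * p / (1 - p)) ^ Y.card * (2 * (2:ℝ) ^ Y.card - 1)) * (W p ρh * φh ρh) := by
          rw [eq_comm]
          have hzero : (if (∅:Finset (Fin n)) = ∅ then (0:ℝ)
              else (2 * p / (1 - p)) ^ (∅:Finset (Fin n)).card *
                (2 * (2:ℝ) ^ (∅:Finset (Fin n)).card - 1)) * (W p ρh * φh ρh) = 0 := by
            rw [if_pos rfl, zero_mul]
          have hse := Finset.sum_erase (s := (satSet t ρh).powerset)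
            (f := fun Y => (if Y = ∅ then (0:ℝ)
              else (2 * p / (1 - p)) ^ Y.card * (2 * (2:ℝ) ^ Y.card - 1))
                * (W p ρh * φh ρh)) (a := ∅) hzero
          rw [← hse]
          apply Finset.sum_congr rfl
          intro Y hY
          rw [if_neg (Finset.ne_of_mem_erase hY)]
        rw [herase]
        have hkey : ∑ Y ∈ (satSet t ρh).powerset.erase ∅,
            ((2 * p / (1 - p)) ^ Y.card * (2 * (2:ℝ) ^ Y.card - 1)) ≤ 1 := by
          apply key_numeric (div_nonneg (by linarith) (by linarith)) hβ
          exact le_trans (Finset.card_le_card (satSet_subset_V t ρh)) hwid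
        calc ∑ Y ∈ (satSet t ρh).powerset.erase ∅,
              ((2 * p / (1 - p)) ^ Y.card * (2 * (2:ℝ) ^ Y.card - 1)) * (W p ρh * φh ρh)
            = (∑ Y ∈ (satSet t ρh).powerset.erase ∅,
              ((2 * p / (1 - p)) ^ Y.card * (2 * (2:ℝ) ^ Y.card - 1))) * (W p ρh * φh ρh) := by
              rw [Finset.sum_mul]
          _ ≤ 1 * (W p ρh * φh ρh) := mul_le_mul_of_nonneg_right hkey hWφh
          _ = W p ρh * φh ρh := one_mul _
      · rw [if_neg hb]
        have : ∀ Y : Finset (Fin n),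
            (if Y = ∅ then (0:ℝ) else (2 * p / (1 - p)) ^ Y.card * ((2 * (2:ℝ) ^ Y.card - 1) *
              (if TTpred t Y ρh then W p ρh * φh ρh else 0))) = 0 := by
          intro Y
          by_cases hY : Y = ∅
          · rw [if_pos hY]
          · rw [if_neg hY]
            have : ¬ TTpred t Y ρh := by
              rintro ⟨h1, h2, -⟩
              exact hb ⟨h1, h2⟩
            rw [if_neg this]
            ring
        rw [Finset.sum_congr rfl (fun Y _ => this Y), Finset.sum_const_zero, mul_zero]
    -- combine
    have hcomb : ∀ ρ : Fin n → Option Bool,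
        (if fals t ρ then φh ρ else 0) + (if ¬ fals t ρ ∧ stars t ρ = ∅ then φh ρ else 0)
          ≤ φh ρ := by
      intro ρ
      by_cases h : fals t ρ
      · simp [h]
      · simp only [if_neg h]
        split
        · simp [hφh ρ]
        · simp [hφh ρ]
    have hfinal : (∑ ρ : Fin n → Option Bool, W p ρ * (if fals t ρ then φh ρ else 0))
        + (∑ ρ : Fin n → Option Bool, W p ρ * (if ¬ fals t ρ ∧ stars t ρ = ∅ then φh ρ else 0))
        ≤ ∑ ρ : Fin n → Option Bool, W p ρ * φh ρ := by
      rw [← Finset.sum_add_distrib]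
      apply Finset.sum_le_sum
      intro ρ _
      rw [← mul_add]
      exact mul_le_mul_of_nonneg_left (hcomb ρ) (hWnn ρ)
    rw [hsplit]
    linarith
end MainInd

-- translation from IsPBDNF-style data to a good sorted term list
section Translate

lemma ite_inst {α : Sort*} (P : Prop) (i1 i2 : Decidable P) (x y : α) :
    @ite _ P i1 x y = @ite _ P i2 x y := by
  congr 1

instance : LeftCommutative (max : ℕ → ℕ → ℕ) := ⟨fun a b c => max_left_comm a b c⟩

lemma evalL_perm {L L' : List (Trm n)} (h : L.Perm L') (x : Fin n → Bool) :
    evalL L x = evalL L' x := by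
  unfold evalL
  exact List.Perm.foldr_eq (h.map _) 0

lemma evalL_filter_disj (l : List (Trm n)) (x : Fin n → Bool) :
    evalL (l.filter (fun u => u.A ∩ u.B = ∅)) x = evalL l x := by
  induction l with
  | nil => rfl
  | cons u l ihl =>
    by_cases hu : u.A ∩ u.B = ∅
    · rw [List.filter_cons_of_pos (by simpa using hu), evalL_cons, evalL_cons, ihl]
    · rw [List.filter_cons_of_neg (by simpa using hu), evalL_cons, ihl]
      have : ¬ sat u x := by
        rintro ⟨hA, hB⟩
        obtain ⟨i, hi⟩ := Finset.nonempty_iff_ne_empty.2 hu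
        rw [Finset.mem_inter] at hi
        have h1 := hA i hi.1
        have h2 := hB i hi.2
        rw [h1] at h2
        exact Bool.noConfusion h2
      rw [if_neg this, Nat.zero_max]

lemma le_evalL {l : List (Trm n)} {u : Trm n} (hu : u ∈ l) (x : Fin n → Bool) :
    (if sat u x then u.a else 0) ≤ evalL l x := by
  induction l with
  | nil => cases hu
  | cons v l ihl =>
    rw [evalL_cons]
    rcases List.mem_cons.1 hu with rfl | hu'
    · exact le_max_left _ _
    · exact le_trans (ihl hu') (le_max_right _ _)

lemma evalL_le' {l : List (Trm n)} {x c} (h : ∀ u ∈ l, (if sat u x then u.a else 0) ≤ c) :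
    evalL l x ≤ c := by
  induction l with
  | nil => exact Nat.zero_le c
  | cons v l ihl =>
    rw [evalL_cons]
    exact max_le (h v (List.mem_cons_self))
      (ihl fun u hu => h u (List.mem_cons_of_mem _ hu))

lemma evalL_map_eq_sup {m : ℕ} (a : Fin m → ℕ) (A B : Fin m → Finset (Fin n))
    (x : Fin n → Bool) :
    evalL ((List.finRange m).map (fun t0 => Trm.mk (A t0) (B t0) (a t0))) x
      = Finset.univ.sup (fun t0 =>
          if (∀ i ∈ A t0, x i = true) ∧ (∀ j ∈ B t0, x j = false) then a t0 else 0) := by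
  apply le_antisymm
  · apply evalL_le'
    intro u hu
    rw [List.mem_map] at hu
    obtain ⟨t0, -, rfl⟩ := hu
    have : (if sat (Trm.mk (A t0) (B t0) (a t0)) x then a t0 else 0)
        = (if (∀ i ∈ A t0, x i = true) ∧ (∀ j ∈ B t0, x j = false) then a t0 else 0) := by
      apply ite_inst
    rw [this]
    exact Finset.le_sup (f := fun t0 => if (∀ i ∈ A t0, x i = true) ∧ (∀ j ∈ B t0, x j = false)
      then a t0 else 0) (Finset.mem_univ t0)
  · apply Finset.sup_le
    intro t0 _
    have hmem : Trm.mk (A t0) (B t0) (a t0) ∈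
        (List.finRange m).map (fun t0 => Trm.mk (A t0) (B t0) (a t0)) :=
      List.mem_map_of_mem (List.mem_finRange t0)
    have := le_evalL hmem x
    have h2 : (if sat (Trm.mk (A t0) (B t0) (a t0)) x then a t0 else 0)
        = (if (∀ i ∈ A t0, x i = true) ∧ (∀ j ∈ B t0, x j = false) then a t0 else 0) := by
      apply ite_inst
    rw [h2] at this
    exact this

end Translate

-- numeric consequence of the hypotheses
lemma beta_of_hp {k : ℕ} {p : ℝ} (hk : 1 ≤ k) (hp0 : 0 < p) (hp : p ≤ 1 / (28 * (k:ℝ))) :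
    p < 1 ∧ (1 + 2 * (2 * p / (1 - p))) ^ k ≤ 3 / 2 := by
  have hkR : (1:ℝ) ≤ (k:ℝ) := by exact_mod_cast hk
  have hk0 : (0:ℝ) < k := by linarith
  have hp28 : p ≤ 1/28 := by
    refine le_trans hp ?_
    rw [div_le_div_iff₀ (by nlinarith) (by norm_num)]
    nlinarith
  have hp1 : p < 1 := by linarith
  have hkp : (k:ℝ) * p ≤ 1/28 := by
    have h1 : (k:ℝ) * p ≤ (k:ℝ) * (1/(28*k)) := mul_le_mul_of_nonneg_left hp hk0.le
    have h2 : (k:ℝ) * (1/(28*(k:ℝ))) = 1/28 := by field_simp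
    rw [h2] at h1
    exact h1
  refine ⟨hp1, ?_⟩
  have h1mp : (0:ℝ) < 1 - p := by linarith
  set x : ℝ := 2 * (2 * p / (1 - p)) with hx
  have hxnn : 0 ≤ x := by
    rw [hx]
    positivity
  have hkx : (k:ℝ) * x ≤ 4/27 := by
    have he : (k:ℝ) * x = 4 * ((k:ℝ)*p) / (1-p) := by
      rw [hx]
      field_simp
      ring
    rw [he, div_le_iff₀ h1mp]
    nlinarith
  have hP := pow_mul_one_sub_le x hxnn k
  have hPn : (0:ℝ) ≤ (1+x)^k := by positivity
  have hprod := mul_le_mul_of_nonneg_left hkx hPn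
  nlinarith

theorem final_bound (n k r : ℕ) (hr : 1 ≤ r)
    (p : ℝ) (hp0 : 0 < p) (hp : p ≤ 1 / (28 * (k : ℝ)))
    (m : ℕ) (a : Fin m → ℕ) (A B : Fin m → Finset (Fin n))
    (ha : ∀ t, a t ≤ r) (hAB : ∀ t, (A t).card + (B t).card ≤ k)
    (f : (Fin n → Bool) → ℝ)
    (heq : ∀ x, f x = 2 / r *
      ((Finset.univ.sup fun t =>
        if (∀ i ∈ A t, x i = true) ∧ (∀ j ∈ B t, x j = false) then a t else 0 : ℕ) : ℝ) - 1) :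
    ∑ ρ : Fin n → Option Bool,
        (∏ i, if ρ i = none then p else (1 - p) / 2) *
          ∑ S : Finset (Fin n), |pbFourier (fun x => f fun i => (ρ i).getD (x i)) S|
      ≤ 2 * (r : ℝ) := by
  classical
  have hk : 1 ≤ k := by
    rcases Nat.eq_zero_or_pos k with hk0 | hk0
    · exfalso
      subst hk0
      simp only [Nat.cast_zero, mul_zero, div_zero] at hp
      linarith
    · exact hk0
  obtain ⟨hp1, hβ⟩ := beta_of_hp hk hp0 hp
  -- build the good sorted term list
  set L0 : List (Trm n) :=
    ((List.finRange m).map (fun t0 => Trm.mk (A t0) (B t0) (a t0))).filter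
      (fun u => u.A ∩ u.B = ∅) with hL0
  haveI inst1 : IsTotal (Trm n) (fun u v => v.a ≤ u.a) := ⟨fun x y => le_total y.a x.a⟩
  haveI inst2 : IsTrans (Trm n) (fun u v => v.a ≤ u.a) := ⟨fun x y z h1 h2 => le_trans h2 h1⟩
  set L : List (Trm n) := List.insertionSort (fun u v => v.a ≤ u.a) L0 with hLdef
  have hperm : L.Perm L0 := List.perm_insertionSort _ _
  have hsort : List.Pairwise (fun u v : Trm n => v.a ≤ u.a) L := List.pairwise_insertionSort _ _
  have hmem0 : ∀ u ∈ L, ∃ t0 : Fin m, u = Trm.mk (A t0) (B t0) (a t0) ∧ u.A ∩ u.B = ∅ := by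
    intro u hu
    have h1 := hperm.mem_iff.1 hu
    rw [hL0, List.mem_filter] at h1
    obtain ⟨h2, h3⟩ := h1
    rw [List.mem_map] at h2
    obtain ⟨t0, -, rfl⟩ := h2
    exact ⟨t0, rfl, by simpa using h3⟩
  have hbnd : ∀ u ∈ L, u.a ≤ r := by
    intro u hu
    obtain ⟨t0, rfl, -⟩ := hmem0 u hu
    exact ha t0
  have hdisjL : ∀ u ∈ L, Disjoint u.A u.B := by
    intro u hu
    obtain ⟨t0, -, h3⟩ := hmem0 u hu
    exact Finset.disjoint_iff_inter_eq_empty.2 h3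
  have hgood : ∀ u ∈ L, u.V.card ≤ k ∧ Disjoint u.A u.B := by
    intro u hu
    refine ⟨?_, hdisjL u hu⟩
    obtain ⟨t0, rfl, -⟩ := hmem0 u hu
    exact le_trans (Finset.card_union_le _ _) (hAB t0)
  -- evaluation equality
  have heval : ∀ xb : Fin n → Bool, evalL L xb = Finset.univ.sup (fun t0 =>
      if (∀ i ∈ A t0, xb i = true) ∧ (∀ j ∈ B t0, xb j = false) then a t0 else 0) := by
    intro xb
    rw [evalL_perm hperm, hL0, evalL_filter_disj, evalL_map_eq_sup]
  have hfeq : ∀ ρ : Fin n → Option Bool, (fun x => f fun i => (ρ i).getD (x i))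
      = fun x => 2 / (r:ℝ) * (evalL L (ov ρ x) : ℝ) - 1 := by
    intro ρ
    funext x
    rw [heq, heval]
    rfl
  -- chain the three bounds
  have hstep1 : ∀ ρ : Fin n → Option Bool,
      (∑ S : Finset (Fin n), |pbFourier (fun x => f fun i => (ρ i).getD (x i)) S|)
        ≤ Psi L ρ := by
    intro ρ
    have h1 : (∑ S : Finset (Fin n), |pbFourier (fun x => f fun i => (ρ i).getD (x i)) S|)
        = L1 (fun x => 2 / (r:ℝ) * (evalL L (ov ρ x) : ℝ) - 1) := by
      rw [← hfeq ρ]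
      rfl
    rw [h1]
    exact l1_le_Psi hr L hsort hbnd hdisjL ρ
  have hWnn := W_nonneg (n := n) hp0.le hp1.le
  have hchain : ∑ ρ : Fin n → Option Bool, W p ρ *
        (∑ S : Finset (Fin n), |pbFourier (fun x => f fun i => (ρ i).getD (x i)) S|)
      ≤ ∑ ρ : Fin n → Option Bool, W p ρ * Psi L ρ :=
    Finset.sum_le_sum fun ρ _ => mul_le_mul_of_nonneg_left (hstep1 ρ) (hWnn ρ)
  have hmain := main_ind (k := k) hp0.le hp1 hβ L hgood (fun _ => 1) (fun _ => 1)
    (fun _ => by norm_num) (fun _ => by norm_num) (fun _ _ _ => by norm_num)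
  have hone : ∀ ρ : Fin n → Option Bool, W p ρ * ((1:ℝ) * Psi L ρ) = W p ρ * Psi L ρ := by
    intro ρ; ring
  rw [Finset.sum_congr rfl (fun ρ _ => hone ρ)] at hmain
  have hws : ∑ ρ : Fin n → Option Bool, W p ρ * (1:ℝ) = 1 := by
    rw [Finset.sum_congr rfl (fun ρ _ => mul_one (W p ρ))]
    exact W_sum
  rw [hws] at hmain
  have hrR : (1:ℝ) ≤ (r:ℝ) := by exact_mod_cast hr
  calc ∑ ρ : Fin n → Option Bool,
        (∏ i, if ρ i = none then p else (1 - p) / 2) *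
          ∑ S : Finset (Fin n), |pbFourier (fun x => f fun i => (ρ i).getD (x i)) S|
      = ∑ ρ : Fin n → Option Bool, W p ρ *
          (∑ S : Finset (Fin n), |pbFourier (fun x => f fun i => (ρ i).getD (x i)) S|) := rfl
    _ ≤ ∑ ρ : Fin n → Option Bool, W p ρ * Psi L ρ := hchain
    _ ≤ 2 * 1 := hmain
    _ ≤ 2 * (r:ℝ) := by linarith

end AuxPBDNF


/-- for `f ∈ DNF^{k,r}` and a random restriction `ρ` with
parameter `p ≤ 1/(28k)` (each variable independently `★` w.p. `p`, and `0`/`1`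
each w.p. `(1−p)/2`), the expected Fourier `L₁`-norm of `f|ρ` is at most `2r`. -/
theorem pbdnf_expected_l1_bound (n k r : ℕ) (hr : 1 ≤ r)
    (p : ℝ) (hp0 : 0 < p) (hp : p ≤ 1 / (28 * (k : ℝ)))
    (f : (Fin n → Bool) → ℝ) (hf : IsPBDNF k r f) :
    ∑ ρ : Fin n → Option Bool,
        (∏ i, if ρ i = none then p else (1 - p) / 2) *
          ∑ S : Finset (Fin n), |pbFourier (restrictFun f ρ) S|
      ≤ 2 * (r : ℝ) := by
  obtain ⟨m, a, A, B, ha, hAB, heq⟩ := hf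
  exact AuxPBDNF.final_bound n k r hr p hp0 hp m a A B ha hAB f heq

-- #print axioms pbdnf_expected_l1_bound
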